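/- Let p ≥ 5 be prime and d ≥ 2 with p ∤ d(d-1) and gcd(p-1, d-1) = 1. Then the derivative f_d' of f_d = t^d - d·t - 1 over F_p has d-1 distinct roots in an algebraic closure of F_p, and f_d takes distinct values at these roots. -/

import Mathlib

open Polynomial
open scoped Classical in

/-- For `p ≥ 5` prime and `d ≥ 2` with `p ∤ d(d-1)` and `gcd(p-1, d-1) = 1`, the
derivative of `f_d = t^d - d·t - 1` over `F_p` has `d - 1` distinct roots in an
algebraic closure of `F_p`, and `f_d` takes distinct values at these roots. -/
theorem stmt10 (p : ℕ) (hp : p.Prime) [Fact p.Prime] (hp5 : 5 ≤ p)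
    (d : ℕ) (hd : 2 ≤ d) (hpd : ¬ p ∣ d * (d - 1)) (hgcd : Nat.gcd (p - 1) (d - 1) = 1) :
    ((derivative ((X ^ d - C (d : ZMod p) * X - 1 : (ZMod p)[X]).map
        (algebraMap (ZMod p) (AlgebraicClosure (ZMod p))))).roots.toFinset.card = d - 1)
    ∧ ∀ μ₁ ∈ (derivative ((X ^ d - C (d : ZMod p) * X - 1 : (ZMod p)[X]).map
          (algebraMap (ZMod p) (AlgebraicClosure (ZMod p))))).roots.toFinset,
      ∀ μ₂ ∈ (derivative ((X ^ d - C (d : ZMod p) * X - 1 : (ZMod p)[X]).map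
          (algebraMap (ZMod p) (AlgebraicClosure (ZMod p))))).roots.toFinset,
        ((X ^ d - C (d : ZMod p) * X - 1 : (ZMod p)[X]).map
            (algebraMap (ZMod p) (AlgebraicClosure (ZMod p)))).eval μ₁ =
          ((X ^ d - C (d : ZMod p) * X - 1 : (ZMod p)[X]).map
            (algebraMap (ZMod p) (AlgebraicClosure (ZMod p)))).eval μ₂ → μ₁ = μ₂ := by
  set K := AlgebraicClosure (ZMod p)
  set φ := algebraMap (ZMod p) K
  -- basic nonvanishing facts
  have hpd1 : ¬ p ∣ d := fun h => hpd (dvd_mul_of_dvd_left h _)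
  have hpd2 : ¬ p ∣ (d - 1) := fun h => hpd (dvd_mul_of_dvd_right h _)
  have hd0 : (d : ZMod p) ≠ 0 := by
    simpa [ZMod.natCast_eq_zero_iff] using hpd1
  have hd1 : ((d - 1 : ℕ) : ZMod p) ≠ 0 := by
    simpa [ZMod.natCast_eq_zero_iff] using hpd2
  have hφ : Function.Injective φ := φ.injective
  have hdK : ((d : ℕ) : K) ≠ 0 := by
    rw [← map_natCast φ d]
    exact fun h => hd0 (hφ (by simpa using h))
  have hd1K : ((d - 1 : ℕ) : K) ≠ 0 := by
    rw [← map_natCast φ (d - 1)]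
    exact fun h => hd1 (hφ (by simpa using h))
  -- compute the mapped polynomial and its derivative
  have hmap : (X ^ d - C (d : ZMod p) * X - 1 : (ZMod p)[X]).map φ
      = (X ^ d - C ((d : ℕ) : K) * X - 1 : K[X]) := by
    simp [Polynomial.map_sub, Polynomial.map_pow, Polynomial.map_mul, map_natCast, Polynomial.C_eq_natCast]
  have hder : derivative ((X ^ d - C (d : ZMod p) * X - 1 : (ZMod p)[X]).map φ)
      = C ((d : ℕ) : K) * (X ^ (d - 1) - C (1 : K)) := by
    rw [hmap]
    simp only [derivative_sub, derivative_one, derivative_mul, derivative_C, derivative_X,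
      derivative_X_pow, map_one]
    ring
  have hroots : (derivative ((X ^ d - C (d : ZMod p) * X - 1 : (ZMod p)[X]).map φ)).roots
      = (X ^ (d - 1) - C (1 : K)).roots := by
    rw [hder, roots_C_mul _ hdK]
  have hsep : (X ^ (d - 1) - C (1 : K)).Separable :=
    separable_X_pow_sub_C _ hd1K one_ne_zero
  have hnodup := nodup_roots hsep
  have hcard : Multiset.card (X ^ (d - 1) - C (1 : K)).roots = d - 1 := by
    rw [(splits_iff_card_roots (f := X ^ (d - 1) - C (1 : K))).1
      (IsAlgClosed.splits _), natDegree_X_pow_sub_C]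
  -- membership characterization
  have hmem : ∀ μ : K, μ ∈ (derivative ((X ^ d - C (d : ZMod p) * X - 1 : (ZMod p)[X]).map
      φ)).roots.toFinset → μ ^ (d - 1) = 1 := by
    intro μ hμ
    rw [Multiset.mem_toFinset, hroots, mem_roots] at hμ
    · simpa [sub_eq_zero] using hμ
    · intro h
      have : Multiset.card (X ^ (d - 1) - C (1 : K)).roots = 0 := by rw [h]; simp
      omega
  constructor
  · rw [hroots, Multiset.toFinset_card_of_nodup (by rw [← hroots] at hnodup ⊢; exact hnodup)]
    · exact hcard
  · intro μ₁ h₁ μ₂ h₂ heq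
    have e₁ := hmem μ₁ h₁
    have e₂ := hmem μ₂ h₂
    have pow₁ : μ₁ ^ d = μ₁ := by
      calc μ₁ ^ d = μ₁ ^ (d - 1) * μ₁ := by rw [← pow_succ]; congr 1; omega
      _ = μ₁ := by rw [e₁, one_mul]
    have pow₂ : μ₂ ^ d = μ₂ := by
      calc μ₂ ^ d = μ₂ ^ (d - 1) * μ₂ := by rw [← pow_succ]; congr 1; omega
      _ = μ₂ := by rw [e₂, one_mul]
    rw [hmap] at heq
    simp only [eval_sub, eval_mul, eval_pow, eval_X, eval_C, eval_one, pow₁, pow₂] at heq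
    have key : ((d - 1 : ℕ) : K) * μ₁ = ((d - 1 : ℕ) : K) * μ₂ := by
      have hc : ((d - 1 : ℕ) : K) = ((d : ℕ) : K) - 1 := by
        push_cast [Nat.cast_sub (by omega : 1 ≤ d)]; ring
      rw [hc]
      linear_combination -heq
    exact mul_left_cancel₀ hd1K key
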